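/- Fix σ > 0, θ ∈ (0, σ], and a function γ : (0,∞) → (0,∞). For δ > 0 put α = γ(δ)·√(coth δ), β = γ(δ)⁻¹·√(coth δ), Φ_δ(t,ω) = (σ²/(2π cosh δ))·exp(−t²/α² − ω²/β²), and λ = θ²/(2π). Define D(δ) = Σ_{k=0}^∞ min(θ², σ² e^{−(2k+1)δ}) and R(δ) = Σ_{k=0}^∞ max(0, (1/2)·ln(σ² e^{−(2k+1)δ}/θ²)). Then both (D(δ) − ∬_{ℝ²} min(λ, Φ_δ(t,ω)) dt dω)/coth δ → 0 and (R(δ) − (1/(2π))·∬_{ℝ²} max(0, (1/2)·ln(Φ_δ(t,ω)/λ)) dt dω)/coth δ → 0 as δ → 0+. -/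

import Mathlib

open Real Filter Set MeasureTheory

open scoped ENNReal

lemma my_smul_prod_left (c : ℝ≥0∞) (μ ν : Measure ℝ) [SFinite ν] :
    (c • μ).prod ν = c • (μ.prod ν) := by
  ext s hs
  rw [Measure.prod_apply hs, Measure.smul_apply, Measure.prod_apply hs,
    lintegral_smul_measure]


lemma my_smul_prod_right (c : ℝ≥0∞) (hc : c ≠ ⊤) (μ ν : Measure ℝ) [SFinite μ] [SFinite ν] :
    μ.prod (c • ν) = c • (μ.prod ν) := by
  ext s hs
  rw [Measure.prod_apply hs, Measure.smul_apply, Measure.prod_apply hs, smul_eq_mul,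
    ← lintegral_const_mul' _ _ hc]
  simp [Measure.smul_apply, smul_eq_mul]

lemma planar (g : ℝ → ℝ) (hg : Continuous g) {a b : ℝ} (ha : 0 < a) (hb : 0 < b) :
    ∫ p : ℝ × ℝ, g ((p.1 / a) ^ 2 + (p.2 / b) ^ 2) = (a * b) * (π * ∫ s in Ioi 0, g s) := by
  have hf : Continuous (fun p : ℝ × ℝ => g (p.1 ^ 2 + p.2 ^ 2)) := by fun_prop
  have h1 : Measure.map (fun x : ℝ => x / a) volume = ENNReal.ofReal a • volume := by
    have e : (fun x : ℝ => x / a) = (fun x : ℝ => a⁻¹ * x) := funext fun x => div_eq_inv_mul x a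
    rw [e, Real.map_volume_mul_left (inv_ne_zero ha.ne'), inv_inv, abs_of_pos ha,
      ENNReal.ofReal]
  have h2 : Measure.map (fun x : ℝ => x / b) volume = ENNReal.ofReal b • volume := by
    have e : (fun x : ℝ => x / b) = (fun x : ℝ => b⁻¹ * x) := funext fun x => div_eq_inv_mul x b
    rw [e, Real.map_volume_mul_left (inv_ne_zero hb.ne'), inv_inv, abs_of_pos hb,
      ENNReal.ofReal]
  have ma : Measurable fun x : ℝ => x / a := by fun_prop
  have mb : Measurable fun y : ℝ => y / b := by fun_prop
  have hψ : Measurable (Prod.map (fun x : ℝ => x / a) (fun y : ℝ => y / b)) := ma.prodMap mb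
  have hmap : Measure.map (Prod.map (fun x : ℝ => x / a) (fun y : ℝ => y / b))
      (volume : Measure (ℝ × ℝ)) = (ENNReal.ofReal (a * b)) • volume := by
    rw [Measure.volume_eq_prod, ← Measure.map_prod_map _ _ ma mb, h1, h2, my_smul_prod_left,
      my_smul_prod_right _ ENNReal.ofReal_ne_top, smul_smul,
      ← ENNReal.ofReal_mul ha.le, ← Measure.volume_eq_prod]
  have step1 : ∫ p : ℝ × ℝ, g ((p.1 / a) ^ 2 + (p.2 / b) ^ 2)
      = (a * b) * ∫ p : ℝ × ℝ, g (p.1 ^ 2 + p.2 ^ 2) := by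
    have hi := integral_map (μ := (volume : Measure (ℝ × ℝ)))
      hψ.aemeasurable (f := fun p : ℝ × ℝ => g (p.1 ^ 2 + p.2 ^ 2))
      hf.aestronglyMeasurable
    rw [hmap, integral_smul_measure, ENNReal.toReal_ofReal (by positivity)] at hi
    rw [show (∫ p : ℝ × ℝ, g ((p.1 / a) ^ 2 + (p.2 / b) ^ 2))
        = ∫ x : ℝ × ℝ, (fun p : ℝ × ℝ => g (p.1 ^ 2 + p.2 ^ 2))
          (Prod.map (fun x : ℝ => x / a) (fun y : ℝ => y / b) x) from by
      congr 1, ← hi, smul_eq_mul]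
  have step2 : ∫ p : ℝ × ℝ, g (p.1 ^ 2 + p.2 ^ 2)
      = ∫ p in polarCoord.target, p.1 * g (p.1 ^ 2) := by
    rw [← integral_comp_polarCoord_symm (fun p : ℝ × ℝ => g (p.1 ^ 2 + p.2 ^ 2))]
    refine setIntegral_congr_fun polarCoord.open_target.measurableSet fun p _ => ?_
    have : (p.1 * Real.cos p.2) ^ 2 + (p.1 * Real.sin p.2) ^ 2 = p.1 ^ 2 := by
      rw [mul_pow, mul_pow, ← mul_add, Real.cos_sq_add_sin_sq, mul_one]
    simp [Prod.map, polarCoord, this, smul_eq_mul]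
  have hFm : Continuous (fun r : ℝ => r * g (r ^ 2)) := by fun_prop
  have step3 : ∫ p in polarCoord.target, p.1 * g (p.1 ^ 2)
      = (2 * π) * ∫ r in Ioi (0:ℝ), r * g (r ^ 2) := by
    rw [polarCoord_target]
    have hres : (volume : Measure (ℝ × ℝ)).restrict ((Ioi (0:ℝ)) ×ˢ (Ioo (-π) π))
        = ((volume : Measure ℝ).restrict (Ioi 0)).prod
          ((volume : Measure ℝ).restrict (Ioo (-π) π)) := by
      rw [Measure.volume_eq_prod, Measure.prod_restrict]
    rw [hres]
    have hcomp : (fun p : ℝ × ℝ => p.1 * g (p.1 ^ 2))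
        = (fun r : ℝ => r * g (r ^ 2)) ∘ Prod.fst := rfl
    have him := integral_map (μ := ((volume : Measure ℝ).restrict (Ioi 0)).prod
        ((volume : Measure ℝ).restrict (Ioo (-π) π)))
      measurable_fst.aemeasurable hFm.aestronglyMeasurable
    rw [Measure.map_fst_prod] at him
    simp only [MeasurableSet.univ, Measure.restrict_apply, Set.univ_inter,
      Real.volume_Ioo] at him
    rw [integral_smul_measure, ENNReal.toReal_ofReal (by linarith [Real.pi_pos]),
      smul_eq_mul] at him
    rw [← him]
    ring_nf
  have step4 : ∫ r in Ioi (0:ℝ), r * g (r ^ 2) = (1 / 2) * ∫ s in Ioi (0:ℝ), g s := by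
    have := integral_comp_rpow_Ioi g (p := 2) two_ne_zero
    rw [show (∫ x in Ioi (0:ℝ), (|2| * x ^ ((2:ℝ) - 1)) • g (x ^ (2:ℝ)))
        = ∫ x in Ioi (0:ℝ), 2 * (x * g (x ^ 2)) from
      setIntegral_congr_fun measurableSet_Ioi fun x hx => by
        rw [show (2:ℝ) - 1 = 1 by norm_num, Real.rpow_one,
          show (2:ℝ) = ((2:ℕ):ℝ) by norm_num, Real.rpow_natCast, smul_eq_mul]
        push_cast
        rw [abs_of_nonneg (by norm_num : (0:ℝ) ≤ 2)]
        ring] at this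
    rw [MeasureTheory.integral_const_mul] at this
    linarith
  rw [step1, step2, step3, step4]
  ring

lemma int_min_exp {θ2 c : ℝ} (hθ : 0 < θ2) (hc : 0 < c) :
    ∫ s in Ioi (0:ℝ), min θ2 (c * Real.exp (-s))
      = θ2 * max 0 (Real.log (c / θ2)) + c * Real.exp (-(max 0 (Real.log (c / θ2)))) := by
  set L := max 0 (Real.log (c / θ2)) with hLdef
  have hL0 : 0 ≤ L := le_max_left _ _
  have hcont : Continuous fun s : ℝ => min θ2 (c * Real.exp (-s)) := by fun_prop
  have hexp : IntegrableOn (fun s : ℝ => c * Real.exp (-s)) (Ioi (0:ℝ)) := by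
    have h := exp_neg_integrableOn_Ioi (0:ℝ) one_pos
    have : IntegrableOn (fun s : ℝ => Real.exp (-s)) (Ioi (0:ℝ)) := by
      refine h.congr_fun (fun x _ => by norm_num) measurableSet_Ioi
    exact this.const_mul c
  have hmin : IntegrableOn (fun s : ℝ => min θ2 (c * Real.exp (-s))) (Ioi (0:ℝ)) := by
    refine hexp.mono' hcont.aestronglyMeasurable ?_
    filter_upwards with s
    rw [Real.norm_eq_abs, abs_of_nonneg (le_min hθ.le (by positivity))]
    exact min_le_right _ _
  have hceL : c * Real.exp (-L) ≤ θ2 := by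
    rcases le_or_gt (Real.log (c / θ2)) 0 with h | h
    · have hL : L = 0 := max_eq_left h
      have : c / θ2 ≤ 1 := by
        rcases (Real.log_nonpos_iff (by positivity)).1 h with h'
        exact h'
      rw [hL, neg_zero, Real.exp_zero, mul_one]
      calc c = (c / θ2) * θ2 := by field_simp
        _ ≤ 1 * θ2 := by gcongr
        _ = θ2 := one_mul θ2
    · have hL : L = Real.log (c / θ2) := max_eq_right h.le
      rw [hL, Real.exp_neg, Real.exp_log (by positivity)]
      rw [div_eq_mul_inv, mul_inv, ← mul_assoc]
      field_simp
      exact le_rfl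
  rw [← Ioc_union_Ioi_eq_Ioi hL0, setIntegral_union (Ioc_disjoint_Ioi le_rfl)
    measurableSet_Ioi (hmin.mono_set (by rw [← Ioc_union_Ioi_eq_Ioi hL0]; exact subset_union_left))
    (hmin.mono_set (by rw [← Ioc_union_Ioi_eq_Ioi hL0]; exact subset_union_right))]
  have I1 : ∫ s in Ioc (0:ℝ) L, min θ2 (c * Real.exp (-s)) = θ2 * L := by
    rw [setIntegral_congr_fun measurableSet_Ioc (g := fun _ => θ2) ?_]
    · rw [setIntegral_const, Real.volume_real_Ioc_of_le (by linarith),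
        smul_eq_mul]
      ring
    · intro s hs
      have hL : L = Real.log (c / θ2) := by
        rcases le_or_gt (Real.log (c / θ2)) 0 with h | h
        · exact absurd (hs.1.trans_le (hs.2.trans (max_le le_rfl h))) (lt_irrefl 0)
        · exact max_eq_right h.le
      have h1 : Real.exp s ≤ c / θ2 :=
        (Real.le_log_iff_exp_le (by positivity)).1 (hs.2.trans_eq hL)
      have h2 : θ2 * Real.exp s ≤ c := by
        calc θ2 * Real.exp s ≤ θ2 * (c / θ2) := by gcongr
          _ = c := by field_simp
      refine min_eq_left ?_
      rw [Real.exp_neg, ← sub_nonneg]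
      have hE := Real.exp_pos s
      have heq : c * (Real.exp s)⁻¹ - θ2 = (c - θ2 * Real.exp s) * (Real.exp s)⁻¹ := by
        field_simp
      rw [heq]
      have : 0 ≤ c - θ2 * Real.exp s := by linarith
      positivity
  have I2 : ∫ s in Ioi L, min θ2 (c * Real.exp (-s)) = c * Real.exp (-L) := by
    rw [setIntegral_congr_fun measurableSet_Ioi (g := fun s => c * Real.exp (-s)) ?_]
    · rw [MeasureTheory.integral_const_mul, integral_exp_neg_Ioi]
    · intro s hs
      refine min_eq_right ?_
      calc c * Real.exp (-s) ≤ c * Real.exp (-L) := by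
            gcongr
            exact le_of_lt (mem_Ioi.1 hs)
        _ ≤ θ2 := hceL
  rw [I1, I2]

lemma int_max_log {θ2 c : ℝ} (hθ : 0 < θ2) (hc : 0 < c) :
    ∫ s in Ioi (0:ℝ), max 0 ((1/2) * Real.log (c * Real.exp (-s) / θ2))
      = (max 0 (Real.log (c / θ2)))^2 / 4 := by
  have hlog : ∀ s : ℝ, Real.log (c * Real.exp (-s) / θ2) = Real.log (c / θ2) - s := by
    intro s
    rw [show c * Real.exp (-s) / θ2 = (c / θ2) * Real.exp (-s) by ring,
      Real.log_mul (by positivity) (Real.exp_ne_zero _), Real.log_exp]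
    ring
  set ℓ := Real.log (c / θ2) with hldef
  set L := max 0 ℓ with hLdef
  have hL0 : 0 ≤ L := le_max_left _ _
  have hfeq : (fun s : ℝ => max 0 ((1/2) * Real.log (c * Real.exp (-s) / θ2)))
      = fun s : ℝ => max 0 ((1/2) * (ℓ - s)) := by
    funext s; rw [hlog s]
  rw [hfeq]
  have hcont : Continuous fun s : ℝ => max 0 ((1/2) * (ℓ - s)) := by fun_prop
  have hI1 : IntegrableOn (fun s : ℝ => max 0 ((1/2) * (ℓ - s))) (Ioc (0:ℝ) L) :=
    hcont.integrableOn_Ioc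
  have hI2 : IntegrableOn (fun s : ℝ => max 0 ((1/2) * (ℓ - s))) (Ioi L) := by
    refine (integrableOn_congr_fun (fun s hs => ?_) measurableSet_Ioi).2
      (integrableOn_zero (s := Ioi L))
    have : ℓ ≤ L := le_max_right _ _
    have : (1/2 : ℝ) * (ℓ - s) ≤ 0 := by
      have := mem_Ioi.1 hs; nlinarith
    exact max_eq_left this
  rw [← Ioc_union_Ioi_eq_Ioi hL0, setIntegral_union (Ioc_disjoint_Ioi le_rfl)
    measurableSet_Ioi hI1 hI2]
  have e2 : ∫ s in Ioi L, max 0 ((1/2) * (ℓ - s)) = 0 := by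
    rw [setIntegral_congr_fun measurableSet_Ioi (g := fun _ => (0:ℝ)) ?_]
    · simp
    · intro s hs
      have hlL : ℓ ≤ L := le_max_right _ _
      have : (1/2 : ℝ) * (ℓ - s) ≤ 0 := by
        have := mem_Ioi.1 hs; nlinarith
      exact max_eq_left this
  have e1 : ∫ s in Ioc (0:ℝ) L, max 0 ((1/2) * (ℓ - s)) = L^2 / 4 := by
    rcases eq_or_lt_of_le hL0 with h0 | h0
    · rw [← h0]; simp
    · have hlL : L = ℓ := by
        rcases le_or_gt ℓ 0 with h | h
        · exact absurd h0 (by simp [hLdef, max_eq_left h])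
        · exact max_eq_right h.le
      rw [setIntegral_congr_fun measurableSet_Ioc (g := fun s => (1/2) * (L - s)) ?_]
      · rw [← intervalIntegral.integral_of_le hL0]
        rw [intervalIntegral.integral_const_mul]
        rw [intervalIntegral.integral_sub intervalIntegrable_const
          intervalIntegral.intervalIntegrable_id]
        simp [integral_id]
        ring
      · intro s hs
        rw [hlL]
        refine max_eq_right ?_
        have := hs.2
        nlinarith
  rw [e1, e2, add_zero]

lemma union_Ioc_steps (c δ : ℝ) (hδ : 0 < δ) :
    (⋃ k : ℕ, Ioc (c + 2*(k:ℝ)*δ) (c + 2*((k:ℝ)+1)*δ)) = Ioi c := by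
  classical
  ext x
  simp only [mem_iUnion, mem_Ioc, mem_Ioi]
  constructor
  · rintro ⟨k, h1, _⟩
    have : (0:ℝ) ≤ 2*(k:ℝ)*δ := by positivity
    linarith
  · intro hx
    have hex : ∃ n : ℕ, x ≤ c + 2*(n:ℝ)*δ := by
      obtain ⟨n, hn⟩ := exists_nat_ge ((x - c)/(2*δ))
      refine ⟨n, ?_⟩
      rw [div_le_iff₀ (by positivity)] at hn
      nlinarith
    let n := Nat.find hex
    have hn : x ≤ c + 2*(n:ℝ)*δ := Nat.find_spec hex
    have hn0 : n ≠ 0 := by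
      intro h
      have := hn
      rw [h] at this
      push_cast at this
      linarith
    obtain ⟨m, hm⟩ : ∃ m, n = m + 1 := ⟨n - 1, (Nat.succ_pred_eq_of_pos (Nat.pos_of_ne_zero hn0)).symm⟩
    refine ⟨m, ?_, ?_⟩
    · have hmin := Nat.find_min hex (m := m) (by omega)
      push_neg at hmin
      exact hmin
    · have : ((m:ℝ) + 1) = (n:ℝ) := by rw [hm]; push_cast; ring
      rw [this]
      exact hn

lemma pdisj_steps (c δ : ℝ) (hδ : 0 < δ) :
    Pairwise (Function.onFun Disjoint
      (fun k : ℕ => Ioc (c + 2*(k:ℝ)*δ) (c + 2*((k:ℝ)+1)*δ))) := by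
  refine (pairwise_disjoint_on _).2 fun m n hmn => ?_
  refine Set.Ioc_disjoint_Ioc.2 ?_
  refine le_trans (min_le_left _ _) (le_trans ?_ (le_max_right _ _))
  have : (m:ℝ) + 1 ≤ (n:ℝ) := by exact_mod_cast hmn
  nlinarith

lemma ioc_bounds {g : ℝ → ℝ} (hm : Antitone g) {a b : ℝ} (hab : a ≤ b)
    (hint : IntegrableOn g (Ioc a b)) :
    (b - a) * g b ≤ ∫ s in Ioc a b, g s ∧ (∫ s in Ioc a b, g s) ≤ (b - a) * g a := by
  have hconst : ∀ r : ℝ, IntegrableOn (fun _ : ℝ => r) (Ioc a b) :=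
    fun r => integrableOn_const measure_Ioc_lt_top.ne
  constructor
  · have h := setIntegral_mono_on (hconst (g b)) hint measurableSet_Ioc
      (fun x hx => hm hx.2)
    rwa [setIntegral_const, Real.volume_real_Ioc_of_le (by linarith),
      smul_eq_mul] at h
  · have h := setIntegral_mono_on hint (hconst (g a)) measurableSet_Ioc
      (fun x hx => hm hx.1.le)
    rwa [setIntegral_const, Real.volume_real_Ioc_of_le (by linarith),
      smul_eq_mul] at h

lemma riemann_limit {g : ℝ → ℝ} (hm : Antitone g) (hnn : ∀ s, 0 ≤ g s)
    (hint : IntegrableOn g (Ici (-1:ℝ))) :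
    Tendsto (fun δ : ℝ => δ * ∑' k : ℕ, g ((2*(k:ℝ)+1)*δ)) (nhdsWithin 0 (Ioi 0))
      (nhds ((1/2) * ∫ s in Ioi (0:ℝ), g s)) := by
  have key : ∀ δ ∈ Ioo (0:ℝ) 1,
      (1/2) * (∫ s in Ioi δ, g s) ≤ δ * ∑' k : ℕ, g ((2*(k:ℝ)+1)*δ) ∧
      δ * ∑' k : ℕ, g ((2*(k:ℝ)+1)*δ) ≤ (1/2) * ∫ s in Ioi (-δ), g s := by
    rintro δ ⟨hδ0, hδ1⟩
    set S1 : ℕ → Set ℝ := fun k => Ioc (-δ + 2*(k:ℝ)*δ) (-δ + 2*((k:ℝ)+1)*δ) with hS1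
    set S2 : ℕ → Set ℝ := fun k => Ioc (δ + 2*(k:ℝ)*δ) (δ + 2*((k:ℝ)+1)*δ) with hS2
    have hu1 : (⋃ k, S1 k) = Ioi (-δ) := union_Ioc_steps _ _ hδ0
    have hu2 : (⋃ k, S2 k) = Ioi δ := union_Ioc_steps _ _ hδ0
    have hsub1 : Ioi (-δ) ⊆ Ici (-1:ℝ) := fun x hx => le_of_lt (show (-1:ℝ) < x by
      have := mem_Ioi.1 hx; linarith)
    have hsub2 : Ioi δ ⊆ Ici (-1:ℝ) := fun x hx => le_of_lt (show (-1:ℝ) < x by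
      have := mem_Ioi.1 hx; linarith)
    have hint1 : IntegrableOn g (Ioi (-δ)) := hint.mono_set hsub1
    have hint2 : IntegrableOn g (Ioi δ) := hint.mono_set hsub2
    have hs1 : HasSum (fun k : ℕ => ∫ s in S1 k, g s) (∫ s in Ioi (-δ), g s) := by
      have := hasSum_integral_iUnion (μ := volume) (f := g)
        (fun k => measurableSet_Ioc) (pdisj_steps _ _ hδ0) (by rw [hu1]; exact hint1)
      rwa [hu1] at this
    have hs2 : HasSum (fun k : ℕ => ∫ s in S2 k, g s) (∫ s in Ioi δ, g s) := by
      have := hasSum_integral_iUnion (μ := volume) (f := g)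
        (fun k => measurableSet_Ioc) (pdisj_steps _ _ hδ0) (by rw [hu2]; exact hint2)
      rwa [hu2] at this
    have hb1 : ∀ k : ℕ, 2*δ * g ((2*(k:ℝ)+1)*δ) ≤ ∫ s in S1 k, g s := by
      intro k
      have hab : -δ + 2*(k:ℝ)*δ ≤ -δ + 2*((k:ℝ)+1)*δ := by nlinarith
      have h := (ioc_bounds hm hab (hint1.mono_set (fun x hx =>
        hu1 ▸ (subset_iUnion S1 k) hx))).1
      have e1 : -δ + 2*((k:ℝ)+1)*δ - (-δ + 2*(k:ℝ)*δ) = 2*δ := by ring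
      rw [e1] at h
      have harg : (2*(k:ℝ)+1)*δ = -δ + 2*((k:ℝ)+1)*δ := by ring
      rw [harg]
      exact h
    have hb2 : ∀ k : ℕ, (∫ s in S2 k, g s) ≤ 2*δ * g ((2*(k:ℝ)+1)*δ) := by
      intro k
      have hab : δ + 2*(k:ℝ)*δ ≤ δ + 2*((k:ℝ)+1)*δ := by nlinarith
      have h := (ioc_bounds hm hab (hint2.mono_set (fun x hx =>
        hu2 ▸ (subset_iUnion S2 k) hx))).2
      have e1 : δ + 2*((k:ℝ)+1)*δ - (δ + 2*(k:ℝ)*δ) = 2*δ := by ring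
      rw [e1] at h
      have harg : (2*(k:ℝ)+1)*δ = δ + 2*(k:ℝ)*δ := by ring
      rw [harg]
      exact h
    have hsummul : Summable (fun k : ℕ => 2*δ * g ((2*(k:ℝ)+1)*δ)) := by
      refine Summable.of_nonneg_of_le
        (fun k => mul_nonneg (by positivity) (hnn _)) hb1 hs1.summable
    have hsum : Summable (fun k : ℕ => g ((2*(k:ℝ)+1)*δ)) := by
      have h := hsummul.mul_left (2*δ)⁻¹
      refine h.congr fun k => ?_
      field_simp
    have ht1 : (∫ s in Ioi (-δ), g s) ≥ 2*δ * ∑' k : ℕ, g ((2*(k:ℝ)+1)*δ) := by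
      rw [← hs1.tsum_eq, ← tsum_mul_left]
      exact Summable.tsum_le_tsum hb1 hsummul hs1.summable
    have ht2 : (∫ s in Ioi δ, g s) ≤ 2*δ * ∑' k : ℕ, g ((2*(k:ℝ)+1)*δ) := by
      rw [← hs2.tsum_eq, ← tsum_mul_left]
      exact Summable.tsum_le_tsum hb2 hs2.summable hsummul
    constructor <;> linarith
  -- comparison of ∫ over Ioi (±δ) with Ioi 0
  have hcomp : ∀ δ ∈ Ioo (0:ℝ) 1,
      (1/2) * (∫ s in Ioi (0:ℝ), g s) - δ * g (-1) ≤ (1/2) * (∫ s in Ioi δ, g s) ∧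
      (1/2) * (∫ s in Ioi (-δ), g s) ≤ (1/2) * (∫ s in Ioi (0:ℝ), g s) + δ * g (-1) := by
    rintro δ ⟨hδ0, hδ1⟩
    have hsub0 : Ioi (0:ℝ) ⊆ Ici (-1:ℝ) := fun x hx => le_of_lt (show (-1:ℝ) < x by
      have := mem_Ioi.1 hx; linarith)
    have hsub1 : Ioi (-δ) ⊆ Ici (-1:ℝ) := fun x hx => le_of_lt (show (-1:ℝ) < x by
      have := mem_Ioi.1 hx; linarith)
    have hint0 : IntegrableOn g (Ioi (0:ℝ)) := hint.mono_set hsub0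
    have hint1 : IntegrableOn g (Ioi (-δ)) := hint.mono_set hsub1
    have hintIoc : IntegrableOn g (Ioc (0:ℝ) δ) :=
      hint0.mono_set Ioc_subset_Ioi_self
    have hintIoc2 : IntegrableOn g (Ioc (-δ) 0) :=
      hint1.mono_set Ioc_subset_Ioi_self
    have hsplit1 : (∫ s in Ioi (0:ℝ), g s)
        = (∫ s in Ioc (0:ℝ) δ, g s) + ∫ s in Ioi δ, g s := by
      rw [← setIntegral_union (Ioc_disjoint_Ioi le_rfl) measurableSet_Ioi hintIoc
        (hint0.mono_set (Ioi_subset_Ioi hδ0.le)), Ioc_union_Ioi_eq_Ioi hδ0.le]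
    have hsplit2 : (∫ s in Ioi (-δ), g s)
        = (∫ s in Ioc (-δ) 0, g s) + ∫ s in Ioi (0:ℝ), g s := by
      rw [← setIntegral_union (Ioc_disjoint_Ioi le_rfl) measurableSet_Ioi hintIoc2
        (hint1.mono_set (Ioi_subset_Ioi (by linarith))), Ioc_union_Ioi_eq_Ioi (by linarith)]
    have h1 : (∫ s in Ioc (0:ℝ) δ, g s) ≤ δ * g (-1) := by
      have h := (ioc_bounds hm hδ0.le hintIoc).2
      have : g 0 ≤ g (-1) := hm (by norm_num)
      nlinarith
    have h2 : (∫ s in Ioc (-δ) 0, g s) ≤ δ * g (-1) := by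
      have h := (ioc_bounds hm (by linarith : -δ ≤ (0:ℝ)) hintIoc2).2
      have : g (-δ) ≤ g (-1) := hm (by linarith)
      nlinarith
    have h3 : (0:ℝ) ≤ ∫ s in Ioc (0:ℝ) δ, g s :=
      setIntegral_nonneg measurableSet_Ioc (fun x _ => hnn x)
    have h4 : (0:ℝ) ≤ ∫ s in Ioc (-δ) 0, g s :=
      setIntegral_nonneg measurableSet_Ioc (fun x _ => hnn x)
    constructor <;> nlinarith
  -- squeeze
  have hmem : ∀ᶠ δ in nhdsWithin (0:ℝ) (Ioi 0), δ ∈ Ioo (0:ℝ) 1 :=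
    Ioo_mem_nhdsGT_of_mem (by norm_num : (0:ℝ) ∈ Ico (0:ℝ) 1)
  refine tendsto_of_tendsto_of_tendsto_of_le_of_le'
    (g := fun δ : ℝ => (1/2) * (∫ s in Ioi (0:ℝ), g s) - δ * g (-1))
    (h := fun δ : ℝ => (1/2) * (∫ s in Ioi (0:ℝ), g s) + δ * g (-1)) ?_ ?_ ?_ ?_
  · have : Tendsto (fun δ : ℝ => (1/2) * (∫ s in Ioi (0:ℝ), g s) - δ * g (-1))
        (nhds 0) (nhds ((1/2) * (∫ s in Ioi (0:ℝ), g s) - 0 * g (-1))) :=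
      (continuous_const.sub ((continuous_id.mul continuous_const))).tendsto 0
    simpa using this.mono_left nhdsWithin_le_nhds
  · have : Tendsto (fun δ : ℝ => (1/2) * (∫ s in Ioi (0:ℝ), g s) + δ * g (-1))
        (nhds 0) (nhds ((1/2) * (∫ s in Ioi (0:ℝ), g s) + 0 * g (-1))) :=
      (continuous_const.add ((continuous_id.mul continuous_const))).tendsto 0
    simpa using this.mono_left nhdsWithin_le_nhds
  · filter_upwards [hmem] with δ hδ
    exact le_trans (hcomp δ hδ).1 (key δ hδ).1
  · filter_upwards [hmem] with δ hδ
    exact le_trans (key δ hδ).2 (hcomp δ hδ).2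

noncomputable def Mfun (θ c : ℝ) : ℝ :=
  θ^2 * max 0 (Real.log (c/θ^2)) + c * Real.exp (-(max 0 (Real.log (c/θ^2))))

noncomputable def Qfun (θ c : ℝ) : ℝ := (max 0 (Real.log (c/θ^2)))^2/4

lemma int_min_exp' {θ c : ℝ} (hθ : 0 < θ) (hc : 0 < c) :
    ∫ s in Ioi (0:ℝ), min (θ^2) (c * Real.exp (-s)) = Mfun θ c :=
  int_min_exp (by positivity) hc

lemma int_max_log' {θ c : ℝ} (hθ : 0 < θ) (hc : 0 < c) :
    ∫ s in Ioi (0:ℝ), max 0 ((1/2) * Real.log (c * Real.exp (-s) / θ^2)) = Qfun θ c :=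
  int_max_log (by positivity) hc

lemma maxlog_eq {θ2 c : ℝ} (hθ : 0 < θ2) (hc : 0 < c) :
    (fun s : ℝ => max 0 ((1/2) * Real.log (c * Real.exp (-s) / θ2)))
      = fun s : ℝ => max 0 ((1/2) * (Real.log (c/θ2) - s)) := by
  funext s
  rw [show c * Real.exp (-s) / θ2 = (c / θ2) * Real.exp (-s) by ring,
    Real.log_mul (by positivity) (Real.exp_ne_zero _), Real.log_exp]
  ring_nf

lemma Dlimit {σ θ : ℝ} (hσ : 0 < σ) (hθ0 : 0 < θ) :
    Tendsto (fun δ : ℝ => δ * ∑' k : ℕ, min (θ^2) (σ^2 * Real.exp (-((2*(k:ℝ)+1)*δ))))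
      (nhdsWithin 0 (Ioi 0)) (nhds ((1/2) * Mfun θ (σ^2))) := by
  have hanti : Antitone (fun s : ℝ => min (θ^2) (σ^2 * Real.exp (-s))) := by
    intro s t hst
    exact min_le_min le_rfl
      (mul_le_mul_of_nonneg_left (Real.exp_le_exp.2 (neg_le_neg hst)) (sq_nonneg σ))
  have hnn : ∀ s : ℝ, 0 ≤ min (θ^2) (σ^2 * Real.exp (-s)) :=
    fun s => le_min (by positivity) (by positivity)
  have hintexp : IntegrableOn (fun s : ℝ => σ^2 * Real.exp (-s)) (Ici (-1:ℝ)) := by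
    rw [integrableOn_Ici_iff_integrableOn_Ioi]
    have h := exp_neg_integrableOn_Ioi (-1:ℝ) one_pos
    have h2 : IntegrableOn (fun s : ℝ => Real.exp (-s)) (Ioi (-1:ℝ)) :=
      h.congr_fun (fun x _ => by norm_num) measurableSet_Ioi
    exact h2.const_mul _
  have hint : IntegrableOn (fun s : ℝ => min (θ^2) (σ^2 * Real.exp (-s))) (Ici (-1:ℝ)) := by
    refine hintexp.mono' ?_ ?_
    · exact (continuous_const.min (by fun_prop)).aestronglyMeasurable
    · filter_upwards with s
      rw [Real.norm_eq_abs, abs_of_nonneg (hnn s)]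
      exact min_le_right _ _
  have h := riemann_limit hanti hnn hint
  rwa [int_min_exp' hθ0 (by positivity : (0:ℝ) < σ^2)] at h

lemma Rlimit {σ θ : ℝ} (hσ : 0 < σ) (hθ0 : 0 < θ) :
    Tendsto (fun δ : ℝ => δ * ∑' k : ℕ,
        max 0 ((1/2) * Real.log (σ^2 * Real.exp (-((2*(k:ℝ)+1)*δ)) / θ^2)))
      (nhdsWithin 0 (Ioi 0)) (nhds ((1/2) * Qfun θ (σ^2))) := by
  have hrw := maxlog_eq (θ2 := θ^2) (c := σ^2) (by positivity) (by positivity)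
  set g : ℝ → ℝ := fun s => max 0 ((1/2) * (Real.log (σ^2/θ^2) - s)) with hg
  set ℓ := Real.log (σ^2/θ^2) with hl
  have hanti : Antitone g := by
    intro s t hst
    exact max_le_max le_rfl (by linarith)
  have hnn : ∀ s, 0 ≤ g s := fun s => le_max_left _ _
  have hint : IntegrableOn g (Ici (-1:ℝ)) := by
    set M := max (0:ℝ) ℓ with hM
    have hcont : Continuous g := by fun_prop
    have hIcc : IntegrableOn g (Icc (-1:ℝ) M) := hcont.integrableOn_Icc
    have hIoi : IntegrableOn g (Ioi M) := by
      refine (integrableOn_congr_fun (fun s hs => ?_) measurableSet_Ioi).2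
        (integrableOn_zero (s := Ioi M))
      have h1 : ℓ ≤ M := le_max_right _ _
      have h2 := mem_Ioi.1 hs
      exact max_eq_left (by linarith)
    refine (hIcc.union hIoi).mono_set ?_
    intro x hx
    rcases le_or_gt x M with h | h
    · exact Or.inl ⟨hx, h⟩
    · exact Or.inr h
  have h := riemann_limit hanti hnn hint
  have hval : ∫ s in Ioi (0:ℝ), g s = Qfun θ (σ^2) := by
    rw [← hrw]
    simpa using int_max_log' hθ0 (by positivity : (0:ℝ) < σ^2)
  rw [hval] at h
  refine h.congr fun δ => ?_
  congr 1
  refine tsum_congr fun k => ?_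
  have := congrFun hrw ((2*(k:ℝ)+1)*δ)
  simpa using this.symm

lemma intD_eq {σ θ γδ δ : ℝ} (hσ : 0 < σ) (hθ0 : 0 < θ) (hγ : 0 < γδ) (hδ : 0 < δ)
    (Φδ : ℝ → ℝ → ℝ)
    (hΦδ : ∀ t ω : ℝ, Φδ t ω = (σ^2/(2*π*Real.cosh δ)) *
      Real.exp (-(t^2/(γδ * Real.sqrt (Real.cosh δ/Real.sinh δ))^2) -
        ω^2/((γδ)⁻¹ * Real.sqrt (Real.cosh δ/Real.sinh δ))^2)) :
    ∫ p : ℝ × ℝ, min (θ^2/(2*π)) (Φδ p.1 p.2)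
      = (Real.cosh δ/Real.sinh δ) * ((1/2) * Mfun θ (σ^2/Real.cosh δ)) := by
  have hπ := Real.pi_pos
  have hs : 0 < Real.sinh δ := Real.sinh_pos_iff.2 hδ
  have hc : 0 < Real.cosh δ := Real.cosh_pos δ
  set q := Real.cosh δ / Real.sinh δ with hqdef
  have hq : 0 < q := div_pos hc hs
  set a := γδ * Real.sqrt q with hadef
  set b := (γδ)⁻¹ * Real.sqrt q with hbdef
  have ha : 0 < a := mul_pos hγ (Real.sqrt_pos.2 hq)
  have hb : 0 < b := mul_pos (inv_pos.2 hγ) (Real.sqrt_pos.2 hq)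
  have hab : a * b = q := by
    rw [hadef, hbdef, show γδ * Real.sqrt q * ((γδ)⁻¹ * Real.sqrt q)
      = (γδ * (γδ)⁻¹) * (Real.sqrt q * Real.sqrt q) by ring,
      mul_inv_cancel₀ hγ.ne', one_mul, Real.mul_self_sqrt hq.le]
  set C := σ^2/(2*π*Real.cosh δ) with hCdef
  have hC : 0 < C := by rw [hCdef]; positivity
  set gg : ℝ → ℝ := fun s => min (θ^2/(2*π)) (C * Real.exp (-s)) with hggdef
  have hfe : (fun p : ℝ × ℝ => min (θ^2/(2*π)) (Φδ p.1 p.2))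
      = fun p : ℝ × ℝ => gg ((p.1/a)^2 + (p.2/b)^2) := by
    funext p
    rw [hggdef]
    simp only
    rw [hΦδ p.1 p.2,
      show -(p.1^2/a^2) - p.2^2/b^2 = -((p.1/a)^2 + (p.2/b)^2) by
        rw [div_pow, div_pow]; ring]
  have hggc : Continuous gg := by
    rw [hggdef]; fun_prop
  rw [hfe, planar gg hggc ha hb, hab]
  congr 1
  rw [int_min_exp (by positivity : (0:ℝ) < θ^2/(2*π)) hC]
  have harg : C / (θ^2/(2*π)) = (σ^2/Real.cosh δ)/θ^2 := by
    rw [hCdef]; field_simp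
  rw [harg, Mfun]
  rw [hCdef]
  field_simp

lemma intR_eq {σ θ γδ δ : ℝ} (hσ : 0 < σ) (hθ0 : 0 < θ) (hγ : 0 < γδ) (hδ : 0 < δ)
    (Φδ : ℝ → ℝ → ℝ)
    (hΦδ : ∀ t ω : ℝ, Φδ t ω = (σ^2/(2*π*Real.cosh δ)) *
      Real.exp (-(t^2/(γδ * Real.sqrt (Real.cosh δ/Real.sinh δ))^2) -
        ω^2/((γδ)⁻¹ * Real.sqrt (Real.cosh δ/Real.sinh δ))^2)) :
    ∫ p : ℝ × ℝ, max 0 ((1/2) * Real.log (Φδ p.1 p.2 / (θ^2/(2*π))))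
      = (Real.cosh δ/Real.sinh δ) * (π * Qfun θ (σ^2/Real.cosh δ)) := by
  have hπ := Real.pi_pos
  have hs : 0 < Real.sinh δ := Real.sinh_pos_iff.2 hδ
  have hc : 0 < Real.cosh δ := Real.cosh_pos δ
  set q := Real.cosh δ / Real.sinh δ with hqdef
  have hq : 0 < q := div_pos hc hs
  set a := γδ * Real.sqrt q with hadef
  set b := (γδ)⁻¹ * Real.sqrt q with hbdef
  have ha : 0 < a := mul_pos hγ (Real.sqrt_pos.2 hq)
  have hb : 0 < b := mul_pos (inv_pos.2 hγ) (Real.sqrt_pos.2 hq)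
  have hab : a * b = q := by
    rw [hadef, hbdef, show γδ * Real.sqrt q * ((γδ)⁻¹ * Real.sqrt q)
      = (γδ * (γδ)⁻¹) * (Real.sqrt q * Real.sqrt q) by ring,
      mul_inv_cancel₀ hγ.ne', one_mul, Real.mul_self_sqrt hq.le]
  have hcc : 0 < σ^2/Real.cosh δ := by positivity
  set gg : ℝ → ℝ := fun s => max 0 ((1/2) * (Real.log ((σ^2/Real.cosh δ)/θ^2) - s))
    with hggdef
  have hml := maxlog_eq (θ2 := θ^2) (c := σ^2/Real.cosh δ) (by positivity) hcc
  have hdiv : ∀ E : ℝ, (σ^2/(2*π*Real.cosh δ)) * E / (θ^2/(2*π))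
      = (σ^2/Real.cosh δ) * E / θ^2 := by
    intro E; field_simp
  have hfe : (fun p : ℝ × ℝ => max 0 ((1/2) * Real.log (Φδ p.1 p.2 / (θ^2/(2*π)))))
      = fun p : ℝ × ℝ => gg ((p.1/a)^2 + (p.2/b)^2) := by
    funext p
    rw [hΦδ p.1 p.2,
      show -(p.1^2/a^2) - p.2^2/b^2 = -((p.1/a)^2 + (p.2/b)^2) by
        rw [div_pow, div_pow]; ring,
      hdiv]
    exact congrFun hml _
  have hggc : Continuous gg := by rw [hggdef]; fun_prop
  rw [hfe, planar gg hggc ha hb, hab]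
  congr 2
  rw [hggdef, ← hml]
  simpa using int_max_log' hθ0 hcc

lemma coshdiv_tendsto {σ : ℝ} :
    Tendsto (fun δ : ℝ => σ^2/Real.cosh δ) (nhdsWithin 0 (Ioi 0)) (nhds (σ^2)) := by
  have hcont : Continuous fun δ : ℝ => σ^2/Real.cosh δ :=
    continuous_const.div Real.continuous_cosh (fun x => (Real.cosh_pos x).ne')
  have := (hcont.tendsto 0).mono_left (nhdsWithin_le_nhds (s := Ioi (0:ℝ)))
  simpa [Real.cosh_zero] using this

lemma maxlog_contAt {θ : ℝ} (hθ0 : 0 < θ) {c : ℝ} (hc : 0 < c) :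
    ContinuousAt (fun x : ℝ => max 0 (Real.log (x/θ^2))) c := by
  refine continuousAt_const.max ?_
  have h1 : ContinuousAt Real.log (c/θ^2) := Real.continuousAt_log (by positivity)
  have h2 : ContinuousAt (fun x : ℝ => x/θ^2) c := continuousAt_id.div_const _
  exact ContinuousAt.comp (g := Real.log) h1 h2

lemma Mcont {σ θ : ℝ} (hσ : 0 < σ) (hθ0 : 0 < θ) :
    Tendsto (fun δ : ℝ => Mfun θ (σ^2/Real.cosh δ)) (nhdsWithin 0 (Ioi 0))
      (nhds (Mfun θ (σ^2))) := by
  have hM : ContinuousAt (Mfun θ) (σ^2) := by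
    have hmax := maxlog_contAt hθ0 (by positivity : (0:ℝ) < σ^2)
    show ContinuousAt (fun c : ℝ => θ^2 * max 0 (Real.log (c/θ^2))
      + c * Real.exp (-(max 0 (Real.log (c/θ^2))))) (σ^2)
    exact (continuousAt_const.mul hmax).add
      (continuousAt_id.mul ((Real.continuous_exp.continuousAt).comp hmax.neg))
  exact hM.tendsto.comp coshdiv_tendsto

lemma Qcont {σ θ : ℝ} (hσ : 0 < σ) (hθ0 : 0 < θ) :
    Tendsto (fun δ : ℝ => Qfun θ (σ^2/Real.cosh δ)) (nhdsWithin 0 (Ioi 0))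
      (nhds (Qfun θ (σ^2))) := by
  have hM : ContinuousAt (Qfun θ) (σ^2) := by
    have hmax := maxlog_contAt hθ0 (by positivity : (0:ℝ) < σ^2)
    show ContinuousAt (fun c : ℝ => (max 0 (Real.log (c/θ^2)))^2/4) (σ^2)
    exact (hmax.pow 2).div_const 4
  exact hM.tendsto.comp coshdiv_tendsto

lemma tanhlim : Tendsto (fun δ : ℝ => (Real.sinh δ/Real.cosh δ)/δ)
    (nhdsWithin 0 (Ioi 0)) (nhds 1) := by
  have hd := hasDerivAt_iff_tendsto_slope.1 (Real.hasDerivAt_sinh 0)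
  rw [Real.cosh_zero] at hd
  have h1 : Tendsto (fun δ : ℝ => Real.sinh δ/δ) (nhdsWithin 0 {(0:ℝ)}ᶜ) (nhds 1) := by
    refine hd.congr fun δ => ?_
    simp [slope_def_field, Real.sinh_zero]
  have h2 : Tendsto (fun δ : ℝ => Real.sinh δ/δ) (nhdsWithin 0 (Ioi 0)) (nhds 1) :=
    h1.mono_left (nhdsWithin_mono 0 (fun x hx => ne_of_gt hx))
  have hcosh : Tendsto (fun δ : ℝ => Real.cosh δ) (nhdsWithin 0 (Ioi 0)) (nhds 1) := by
    have := (Real.continuous_cosh.tendsto 0).mono_left (nhdsWithin_le_nhds (s := Ioi (0:ℝ)))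
    simpa [Real.cosh_zero] using this
  have h3 := h2.div hcosh one_ne_zero
  rw [div_one] at h3
  refine h3.congr fun δ => ?_
  simp only [Pi.div_apply]
  rw [div_div, div_div, mul_comm]

/-- Theorem 4 of the paper: reverse water-filling in the time–frequency plane for the rate
distortion function of the nonstationary Gaussian source. With `α = γ(δ)·√(coth δ)`,
`β = γ(δ)⁻¹·√(coth δ)`, Wigner–Ville spectrum
`Φ_δ(t,ω) = (σ²/(2π cosh δ))·exp(−t²/α² − ω²/β²)` and parameter `λ = θ²/(2π)`, it holds
`D ≐ ∬ min(λ, Φ_δ)` and `R ≐ (1/(2π))·∬ ((1/2)·ln(Φ_δ/λ))⁺`, where `A ≐ B` means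
`(A − B)/coth δ → 0` as `δ → 0+`. -/
theorem reverse_waterfilling_tf
    (σ θ : ℝ) (hσ : 0 < σ) (hθ : θ ∈ Set.Ioc 0 σ)
    (γ : ℝ → ℝ) (hγ : ∀ δ > 0, 0 < γ δ)
    (Φ : ℝ → ℝ → ℝ → ℝ)
    (hΦ : ∀ δ > 0, ∀ t ω : ℝ, Φ δ t ω =
      (σ ^ 2 / (2 * π * Real.cosh δ)) *
        Real.exp (-(t ^ 2 / (γ δ * Real.sqrt (Real.cosh δ / Real.sinh δ)) ^ 2) -
          ω ^ 2 / ((γ δ)⁻¹ * Real.sqrt (Real.cosh δ / Real.sinh δ)) ^ 2))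
    (D R : ℝ → ℝ)
    (hD : ∀ δ > 0, D δ =
      ∑' k : ℕ, min (θ ^ 2) (σ ^ 2 * Real.exp (-((2 * (k : ℝ) + 1) * δ))))
    (hR : ∀ δ > 0, R δ =
      ∑' k : ℕ, max 0 ((1 / 2) *
        Real.log (σ ^ 2 * Real.exp (-((2 * (k : ℝ) + 1) * δ)) / θ ^ 2))) :
    Filter.Tendsto
      (fun δ : ℝ =>
        (D δ - ∫ p : ℝ × ℝ, min (θ ^ 2 / (2 * π)) (Φ δ p.1 p.2)) /
          (Real.cosh δ / Real.sinh δ))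
      (nhdsWithin 0 (Set.Ioi 0)) (nhds 0) ∧
    Filter.Tendsto
      (fun δ : ℝ =>
        (R δ - (1 / (2 * π)) * ∫ p : ℝ × ℝ,
            max 0 ((1 / 2) * Real.log (Φ δ p.1 p.2 / (θ ^ 2 / (2 * π))))) /
          (Real.cosh δ / Real.sinh δ))
      (nhdsWithin 0 (Set.Ioi 0)) (nhds 0) := by
  have hθ0 : 0 < θ := hθ.1
  have hπ := Real.pi_pos
  constructor
  · -- distortion part
    have hDd : Tendsto (fun δ : ℝ => D δ * δ) (nhdsWithin 0 (Ioi 0))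
        (nhds ((1/2) * Mfun θ (σ^2))) := by
      refine (Dlimit hσ hθ0).congr' ?_
      filter_upwards [self_mem_nhdsWithin] with δ hδ
      rw [hD δ hδ, mul_comm]
    have base := (hDd.mul tanhlim).sub ((Mcont hσ hθ0).const_mul (1/2 : ℝ))
    rw [show (1/2 : ℝ) * Mfun θ (σ^2) * 1 - 1/2 * Mfun θ (σ^2) = 0 by ring] at base
    refine base.congr' ?_
    filter_upwards [self_mem_nhdsWithin] with δ hδ
    have hδ' : (0:ℝ) < δ := hδ
    have hs : 0 < Real.sinh δ := Real.sinh_pos_iff.2 hδ'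
    have hc : 0 < Real.cosh δ := Real.cosh_pos δ
    rw [intD_eq hσ hθ0 (hγ δ hδ) hδ' (Φ δ) (hΦ δ hδ)]
    field_simp
  · -- rate part
    have hRd : Tendsto (fun δ : ℝ => R δ * δ) (nhdsWithin 0 (Ioi 0))
        (nhds ((1/2) * Qfun θ (σ^2))) := by
      refine (Rlimit hσ hθ0).congr' ?_
      filter_upwards [self_mem_nhdsWithin] with δ hδ
      rw [hR δ hδ, mul_comm]
    have base := (hRd.mul tanhlim).sub ((Qcont hσ hθ0).const_mul (1/2 : ℝ))
    rw [show (1/2 : ℝ) * Qfun θ (σ^2) * 1 - 1/2 * Qfun θ (σ^2) = 0 by ring] at base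
    refine base.congr' ?_
    filter_upwards [self_mem_nhdsWithin] with δ hδ
    have hδ' : (0:ℝ) < δ := hδ
    have hs : 0 < Real.sinh δ := Real.sinh_pos_iff.2 hδ'
    have hc : 0 < Real.cosh δ := Real.cosh_pos δ
    rw [intR_eq hσ hθ0 (hγ δ hδ) hδ' (Φ δ) (hΦ δ hδ)]
    field_simp
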